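/- arXiv:2308.03719 — 2 statements merged into one kernel-verified Lean document; each statement's English description precedes it below -/
import Mathlib

section
/- Let n ≥ 4 be an even integer and let n₁ be an integer with 1 ≤ n₁ ≤ n/2. The multiset of eigenvalues (roots of the characteristic polynomial, with multiplicity) of the Laplacian matrix L(Γ_{n,n₁}) is: 0 with multiplicity 1, n−2 with multiplicity n/2 − n₁, and n with multiplicity (n/2 + n₁) − 1. -/
open Matrix Polynomial Finset

/-- The graph `Γ_{n,n₁}` on `Fin n`: the complete graph `K_n` with the edges
`{i, i + n/2}` for `n₁ ≤ i < n/2` deleted. For `n₁ = 0` this is the cocktail party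
graph `CP_n`, and for `1 ≤ n₁ ≤ n/2` it is obtained from `CP_n` by adding `n₁` of the
`n/2` missing edges. -/
def gammaGraph (n n₁ : ℕ) : SimpleGraph (Fin n) where
  Adj i j := i ≠ j ∧ ¬ ∃ k : ℕ, n₁ ≤ k ∧ k < n / 2 ∧
      (((i : ℕ) = k ∧ (j : ℕ) = k + n / 2) ∨ ((j : ℕ) = k ∧ (i : ℕ) = k + n / 2))
  symm := ⟨fun _ _ ⟨h1, h2⟩ =>
    ⟨h1.symm, fun ⟨k, hk1, hk2, hor⟩ => h2 ⟨k, hk1, hk2, hor.symm⟩⟩⟩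
  loopless := ⟨fun _ h => h.1 rfl⟩

noncomputable instance (n n₁ : ℕ) : DecidableRel (gammaGraph n n₁).Adj :=
  fun _ _ => Classical.dec _

section Infrastructure

lemma charpoly_diagonal' {κ : Type*} [Fintype κ] [DecidableEq κ] (d : κ → ℝ) :
    (Matrix.diagonal d).charpoly = ∏ i, (X - C (d i)) := by
  have h : charmatrix (Matrix.diagonal d) = Matrix.diagonal (fun i => X - C (d i)) := by
    ext i j
    by_cases h : i = j
    · subst h; simp
    · simp [Matrix.diagonal_apply_ne _ h, h]
  rw [Matrix.charpoly, h, Matrix.det_diagonal]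

lemma charpoly_conj' {κ : Type*} [Fintype κ] [DecidableEq κ] (M V W D : Matrix κ κ ℝ)
    (h : M * V = V * D) (h1 : V * W = 1) (h2 : W * V = 1) :
    M.charpoly = D.charpoly := by
  clear h2
  have hM : M = V * D * W := by
    calc M = M * (V * W) := by rw [h1, mul_one]
    _ = (M * V) * W := by rw [mul_assoc]
    _ = V * D * W := by rw [h]
  have hsc : (Matrix.scalar κ (X : ℝ[X])) = (X : ℝ[X]) • (1 : Matrix κ κ ℝ[X]) := by
    ext i j
    by_cases h : i = j <;>
      simp [Matrix.scalar_apply, Matrix.one_apply, Matrix.diagonal_apply, h]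
  have hmap : ∀ (P Q : Matrix κ κ ℝ), (C : ℝ →+* ℝ[X]).mapMatrix (P * Q) =
      (C : ℝ →+* ℝ[X]).mapMatrix P * (C : ℝ →+* ℝ[X]).mapMatrix Q := fun P Q => by
    simp
  have key : charmatrix M = (C : ℝ →+* ℝ[X]).mapMatrix V * charmatrix D *
      (C : ℝ →+* ℝ[X]).mapMatrix W := by
    rw [hM, charmatrix, charmatrix, hsc, mul_sub, sub_mul, mul_smul_comm, smul_mul_assoc,
      mul_one, ← hmap, ← hmap, ← hmap, h1]
    simp
  rw [Matrix.charpoly, Matrix.charpoly, key, Matrix.det_mul, Matrix.det_mul]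
  have hd : ((C : ℝ →+* ℝ[X]).mapMatrix V).det * ((C : ℝ →+* ℝ[X]).mapMatrix W).det = 1 := by
    rw [← Matrix.det_mul, ← hmap, h1]; simp
  linear_combination (charmatrix D).det * hd

end Infrastructure

/-- `pm m x` is `x mod m` for `x < 2m`. -/
def pm (m x : ℕ) : ℕ := if x < m then x else x - m

section Blocks

variable (n n₁ m : ℕ) [NeZero m]

noncomputable def Qm : Matrix (Fin m) (Fin m) ℝ :=
  Matrix.of fun p q => if q = 0 then 1 else (if p = q then 1 else 0) - (if p = 0 then 1 else 0)

noncomputable def Qinv : Matrix (Fin m) (Fin m) ℝ :=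
  Matrix.of fun p q => if p = 0 then (m : ℝ)⁻¹ else (if p = q then 1 else 0) - (m : ℝ)⁻¹

noncomputable def B1 : Matrix (Fin m) (Fin m) ℝ :=
  Matrix.of fun p q => (if p = q then (n : ℝ) else 0) - 2

noncomputable def d0 : Fin m → ℝ := fun p => if p = 0 then 0 else n

noncomputable def d1 : Fin m → ℝ := fun p => if (p : ℕ) < n₁ then (n : ℝ) else (n : ℝ) - 2

noncomputable def Am : Matrix (Fin m) (Fin m) ℝ :=
  Matrix.of fun p q =>
    (if (p : ℕ) = (q : ℕ) then (n : ℝ) else 0) - 1 -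
      (if (p : ℕ) = (q : ℕ) ∧ n₁ ≤ (p : ℕ) then 1 else 0)

noncomputable def Bmm : Matrix (Fin m) (Fin m) ℝ :=
  Matrix.of fun p q => (if (p : ℕ) = (q : ℕ) ∧ n₁ ≤ (p : ℕ) then (1 : ℝ) else 0) - 1

noncomputable def Tm : Matrix (Fin m ⊕ Fin m) (Fin m ⊕ Fin m) ℝ :=
  Matrix.fromBlocks 1 1 1 (-1)

lemma card_erase_zero : (Finset.univ.erase (0 : Fin m)).card = m - 1 := by
  rw [Finset.card_erase_of_mem (Finset.mem_univ _), Finset.card_univ, Fintype.card_fin]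

lemma Qm_colsum (r : Fin m) : ∑ q, Qm m q r = if r = 0 then (m : ℝ) else 0 := by
  by_cases hr : r = 0
  · subst hr
    simp [Qm]
  · have : ∀ q : Fin m, Qm m q r = (if q = r then (1:ℝ) else 0) - (if q = 0 then 1 else 0) := by
      intro q; simp [Qm, hr]
    rw [Finset.sum_congr rfl fun q _ => this q, Finset.sum_sub_distrib]
    simp [Finset.sum_ite_eq', hr]

lemma Qm_mul_Qinv : Qm m * Qinv m = 1 := by
  have hm : 0 < m := Nat.pos_of_ne_zero (NeZero.ne m)
  have hm' : (m : ℝ) ≠ 0 := Nat.cast_ne_zero.mpr hm.ne'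
  have hcast : ((m - 1 : ℕ) : ℝ) = (m : ℝ) - 1 := by
    rw [Nat.cast_sub hm]; simp
  ext p r
  rw [Matrix.mul_apply, ← Finset.add_sum_erase _ _ (Finset.mem_univ (0 : Fin m))]
  by_cases hp : p = 0
  · subst hp
    have hrw : ∀ q ∈ Finset.univ.erase (0 : Fin m),
        Qm m 0 q * Qinv m q r = (m : ℝ)⁻¹ - (if q = r then 1 else 0) := by
      intro q hq
      have hq0 : q ≠ 0 := Finset.ne_of_mem_erase hq
      simp only [Qm, Qinv, Matrix.of_apply, if_neg hq0, if_neg (Ne.symm hq0), if_pos rfl]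
      norm_num
    rw [Finset.sum_congr rfl hrw, Finset.sum_sub_distrib, Finset.sum_const, card_erase_zero,
      Finset.sum_ite_eq' (Finset.univ.erase (0 : Fin m)) r (fun _ => (1:ℝ))]
    simp only [Qm, Qinv, Matrix.of_apply, if_pos rfl, Matrix.one_apply, Finset.mem_erase,
      Finset.mem_univ, and_true, nsmul_eq_mul, hcast, one_mul, if_true]
    by_cases hr : r = 0
    · subst hr
      simp only [if_pos rfl, Finset.mem_erase, ne_eq, not_true_eq_false, false_and, if_false, if_true]
      field_simp
      ring
    · rw [if_pos hr, if_neg (Ne.symm hr)]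
      field_simp
      ring
  · have hrw : ∀ q ∈ Finset.univ.erase (0 : Fin m),
        Qm m p q * Qinv m q r =
          if p = q then ((if q = r then (1:ℝ) else 0) - (m : ℝ)⁻¹) else 0 := by
      intro q hq
      have hq0 : q ≠ 0 := Finset.ne_of_mem_erase hq
      simp only [Qm, Qinv, Matrix.of_apply, if_neg hq0, if_neg hp]
      rw [sub_zero, ite_mul, one_mul, zero_mul]
    rw [Finset.sum_congr rfl hrw, Finset.sum_ite_eq]
    simp only [Qm, Qinv, Matrix.of_apply, if_pos rfl, if_neg hp, Finset.mem_erase,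
      Finset.mem_univ, and_true, ne_eq, hp, not_false_eq_true, if_pos, one_mul,
      Matrix.one_apply]
    by_cases hpr : p = r <;> simp [hpr] <;> ring

lemma Qinv_mul_Qm : Qinv m * Qm m = 1 := by
  have hm : 0 < m := Nat.pos_of_ne_zero (NeZero.ne m)
  have hm' : (m : ℝ) ≠ 0 := Nat.cast_ne_zero.mpr hm.ne'
  ext p r
  rw [Matrix.mul_apply]
  by_cases hp : p = 0
  · subst hp
    have hrw : ∀ q ∈ (Finset.univ : Finset (Fin m)),
        Qinv m 0 q * Qm m q r = (m : ℝ)⁻¹ * Qm m q r := by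
      intro q _; simp [Qinv]
    rw [Finset.sum_congr rfl hrw, ← Finset.mul_sum, Qm_colsum]
    by_cases hr : r = 0
    · subst hr; simp [Matrix.one_apply]
    · simp [Matrix.one_apply, hr, Ne.symm hr]
  · have hrw : ∀ q ∈ (Finset.univ : Finset (Fin m)),
        Qinv m p q * Qm m q r =
          (if p = q then Qm m q r else 0) - (m : ℝ)⁻¹ * Qm m q r := by
      intro q _
      simp only [Qinv, Matrix.of_apply, if_neg hp]
      rw [sub_mul, ite_mul, one_mul, zero_mul]
    rw [Finset.sum_congr rfl hrw, Finset.sum_sub_distrib, Finset.sum_ite_eq, ← Finset.mul_sum,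
      Qm_colsum]
    simp only [Finset.mem_univ, if_pos, Qm, Matrix.of_apply, Matrix.one_apply, if_neg hp, if_true]
    by_cases hr : r = 0
    · subst hr
      simp only [if_true, if_neg hp]
      field_simp
      ring
    · rw [if_neg hr, if_neg hr, mul_zero, sub_zero]
      by_cases hpr : p = r <;> simp [hpr, Ne.symm]

lemma B1_mul_Qm (hn : n = m + m) : B1 n m * Qm m = Qm m * Matrix.diagonal (d0 n m) := by
  ext p r
  rw [Matrix.mul_apply, Matrix.mul_diagonal]
  have hrw : ∀ q ∈ (Finset.univ : Finset (Fin m)),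
      B1 n m p q * Qm m q r =
        (if p = q then (n : ℝ) * Qm m q r else 0) - 2 * Qm m q r := by
    intro q _
    simp only [B1, Matrix.of_apply]
    rw [sub_mul, ite_mul, zero_mul]
  rw [Finset.sum_congr rfl hrw, Finset.sum_sub_distrib, Finset.sum_ite_eq, ← Finset.mul_sum,
    Qm_colsum]
  simp only [Finset.mem_univ, if_pos]
  by_cases hr : r = 0
  · subst hr
    simp only [Qm, d0, Matrix.of_apply, if_pos rfl, mul_one, mul_zero]
    have : ((n : ℝ)) = (m : ℝ) + m := by rw [hn]; push_cast; ring
    rw [this]; norm_num; try ring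
  · simp only [d0, if_neg hr, mul_zero, sub_zero]
    ring

lemma AB_add : Am n n₁ m + Bmm n₁ m = B1 n m := by
  ext p q
  simp only [Am, Bmm, B1, Matrix.add_apply, Matrix.of_apply, Fin.ext_iff]
  split_ifs <;> first | ring1 | (exfalso; omega)

lemma AB_sub : Am n n₁ m - Bmm n₁ m = Matrix.diagonal (d1 n n₁ m) := by
  ext p q
  simp only [Am, Bmm, Matrix.sub_apply, Matrix.of_apply, Fin.ext_iff,
    Matrix.diagonal_apply, d1]
  split_ifs <;> first | ring1 | (exfalso; omega)

lemma block_conj :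
    Matrix.fromBlocks (Am n n₁ m) (Bmm n₁ m) (Bmm n₁ m) (Am n n₁ m) * Tm m =
      Tm m * Matrix.fromBlocks (B1 n m) 0 0 (Matrix.diagonal (d1 n n₁ m)) := by
  rw [Tm, Matrix.fromBlocks_multiply, Matrix.fromBlocks_multiply]
  simp only [Matrix.mul_one, Matrix.one_mul, Matrix.mul_zero, Matrix.zero_mul,
    Matrix.mul_neg, Matrix.neg_mul, add_zero, zero_add, ← sub_eq_add_neg, zero_sub]
  rw [AB_add n n₁ m, AB_sub n n₁ m, add_comm (Bmm n₁ m) (Am n n₁ m)]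
  rw [AB_add n n₁ m, show Bmm n₁ m - Am n n₁ m = -(Am n n₁ m - Bmm n₁ m) from (neg_sub _ _).symm,
    AB_sub n n₁ m]

lemma Tm_sq : Tm m * Tm m = (2 : ℝ) • 1 := by
  rw [Tm, Matrix.fromBlocks_multiply, ← Matrix.fromBlocks_one (l := Fin m) (m := Fin m)
    (α := ℝ), Matrix.fromBlocks_smul]
  congr 1 <;> try congr 1
  all_goals simp [two_smul]

lemma Tm_mul_inv : Tm m * ((1/2 : ℝ) • Tm m) = 1 := by
  rw [Matrix.mul_smul, Tm_sq]
  rw [smul_smul]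
  norm_num

lemma inv_mul_Tm : ((1/2 : ℝ) • Tm m) * Tm m = 1 := by
  rw [Matrix.smul_mul, Tm_sq]
  rw [smul_smul]
  norm_num

end Blocks

section Graph

variable (n n₁ m : ℕ)

lemma gamma_adj_iff (hm : n = m + m) (h2 : n₁ ≤ m) (i j : Fin n) :
    (gammaGraph n n₁).Adj i j ↔
      ((i : ℕ) ≠ (j : ℕ) ∧ ¬ (pm m i = pm m j ∧ n₁ ≤ pm m i)) := by
  have hi := i.isLt
  have hj := j.isLt
  show (i ≠ j ∧ ¬ ∃ k : ℕ, n₁ ≤ k ∧ k < n / 2 ∧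
      (((i : ℕ) = k ∧ (j : ℕ) = k + n / 2) ∨ ((j : ℕ) = k ∧ (i : ℕ) = k + n / 2))) ↔ _
  constructor
  · rintro ⟨hne, hnex⟩
    have hne' : (i : ℕ) ≠ (j : ℕ) := fun h => hne (Fin.ext h)
    refine ⟨hne', fun ⟨hp, hn'⟩ => hnex ⟨min (i : ℕ) (j : ℕ), ?_, ?_, ?_⟩⟩ <;>
      · simp only [pm] at hp hn'
        split_ifs at hp hn' <;> omega
  · rintro ⟨hne, hnp⟩
    refine ⟨fun h => hne (by rw [h]), fun ⟨k, hk1, hk2, hor⟩ => hnp ?_⟩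
    simp only [pm]
    split_ifs <;> omega

lemma gamma_degree (hm : n = m + m) (h2 : n₁ ≤ m) (hm2 : 2 ≤ m) (i : Fin n) :
    (gammaGraph n n₁).degree i = n - 1 - (if n₁ ≤ pm m i then 1 else 0) := by
  have hi := i.isLt
  rw [← SimpleGraph.card_neighborFinset_eq_degree, SimpleGraph.neighborFinset_eq_filter]
  by_cases hc : n₁ ≤ pm m (i : ℕ)
  · set w : Fin n := ⟨if (i : ℕ) < m then (i : ℕ) + m else (i : ℕ) - m, by
      split_ifs <;> omega⟩ with hw
    have hwv : (w : ℕ) = if (i : ℕ) < m then (i : ℕ) + m else (i : ℕ) - m := rfl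
    have hfilter : Finset.univ.filter ((gammaGraph n n₁).Adj i) =
        (Finset.univ.erase i).erase w := by
      ext j
      have hj := j.isLt
      simp only [Finset.mem_filter, Finset.mem_univ, true_and, Finset.mem_erase, ne_eq,
        gamma_adj_iff n n₁ m hm h2 i j]
      constructor
      · rintro ⟨hne, hnp⟩
        refine ⟨fun h => ?_, fun h => hne (by rw [h]), trivial⟩
        apply hnp
        subst h
        simp only [pm, hwv] at *
        constructor <;> split_ifs at * <;> omega
      · rintro ⟨hjw, hji, -⟩
        have hjw' : (j : ℕ) ≠ (w : ℕ) := fun h => hjw (Fin.ext h)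
        have hji' : (j : ℕ) ≠ (i : ℕ) := fun h => hji (Fin.ext h)
        refine ⟨fun h => hji' h.symm, fun ⟨hp, hn'⟩ => ?_⟩
        simp only [pm, hwv] at *
        clear hw
        split_ifs at * <;> omega
    have hwmem : w ∈ Finset.univ.erase i := by
      refine Finset.mem_erase.mpr ⟨fun h => ?_, Finset.mem_univ _⟩
      have : (w : ℕ) = (i : ℕ) := by rw [h]
      simp only [hwv] at this
      split_ifs at this <;> omega
    rw [hfilter, Finset.card_erase_of_mem hwmem, Finset.card_erase_of_mem (Finset.mem_univ _),
      Finset.card_univ, Fintype.card_fin, if_pos hc]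
    try omega
  · have hfilter : Finset.univ.filter ((gammaGraph n n₁).Adj i) = Finset.univ.erase i := by
      ext j
      simp only [Finset.mem_filter, Finset.mem_univ, true_and, Finset.mem_erase, ne_eq,
        gamma_adj_iff n n₁ m hm h2 i j]
      constructor
      · rintro ⟨hne, -⟩
        exact ⟨fun h => hne (by rw [h]), trivial⟩
      · rintro ⟨hji, -⟩
        exact ⟨fun h => hji (Fin.ext h.symm), fun ⟨hp, hn'⟩ => hc (hp ▸ hn')⟩
    rw [hfilter, Finset.card_erase_of_mem (Finset.mem_univ _), Finset.card_univ,
      Fintype.card_fin, if_neg hc]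
    omega

lemma gamma_lap_eq (hm : n = m + m) (h2 : n₁ ≤ m) (hm2 : 2 ≤ m) :
    SimpleGraph.lapMatrix ℝ (gammaGraph n n₁) = Matrix.of (fun i j : Fin n =>
      (if (i : ℕ) = (j : ℕ) then (n : ℝ) else 0) - 1 -
        (if pm m i = pm m j ∧ n₁ ≤ pm m i then
          (if (i : ℕ) = (j : ℕ) then 1 else -1) else 0)) := by
  ext i j
  have hi := i.isLt
  have hj := j.isLt
  rw [SimpleGraph.lapMatrix]
  simp only [Matrix.sub_apply, SimpleGraph.degMatrix, Matrix.diagonal_apply,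
    SimpleGraph.adjMatrix_apply, Matrix.of_apply]
  by_cases hij : i = j
  · subst hij
    rw [if_pos rfl, if_pos rfl, if_neg (SimpleGraph.irrefl _), gamma_degree n n₁ m hm h2 hm2 i]
    by_cases hc : n₁ ≤ pm m (i : ℕ)
    · rw [if_pos hc, if_pos ⟨rfl, hc⟩]
      push_cast [show (1:ℕ) ≤ n - 1 by omega, show (1:ℕ) ≤ n by omega]
      norm_num
    · rw [if_neg hc, if_neg (fun h => hc h.2), Nat.sub_zero]
      push_cast [show (1:ℕ) ≤ n by omega]
      ring
  · have hij' : (i : ℕ) ≠ (j : ℕ) := fun h => hij (Fin.ext h)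
    have hAdj := gamma_adj_iff n n₁ m hm h2 i j
    rw [if_neg hij, if_neg hij']
    by_cases hc : pm m i = pm m j ∧ n₁ ≤ pm m i
    · rw [if_neg (show ¬ (gammaGraph n n₁).Adj i j from fun h => (hAdj.mp h).2 hc), if_pos hc,
        if_neg hij']
      ring
    · rw [if_pos (hAdj.mpr ⟨hij', hc⟩), if_neg hc]
      ring

lemma lap_reindex (h2 : n₁ ≤ m) (hm2 : 2 ≤ m) :
    Matrix.reindex finSumFinEquiv.symm finSumFinEquiv.symm
        (SimpleGraph.lapMatrix ℝ (gammaGraph (m + m) n₁)) =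
      Matrix.fromBlocks (Am (m + m) n₁ m) (Bmm n₁ m) (Bmm n₁ m) (Am (m + m) n₁ m) := by
  rw [gamma_lap_eq (m + m) n₁ m rfl h2 hm2]
  ext i j
  rcases i with p | p <;> rcases j with q | q <;>
    · have hp := p.isLt
      have hq := q.isLt
      simp only [Matrix.reindex_apply, Matrix.submatrix_apply, Equiv.symm_symm,
        finSumFinEquiv_apply_left, finSumFinEquiv_apply_right, Matrix.of_apply,
        Fin.coe_castAdd, Fin.coe_natAdd, Matrix.fromBlocks_apply₁₁, Matrix.fromBlocks_apply₁₂,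
        Matrix.fromBlocks_apply₂₁, Matrix.fromBlocks_apply₂₂, Am, Bmm, pm]
      split_ifs <;> first | ring1 | (exfalso; omega)

end Graph

/-- The Laplacian eigenvalues of `Γ_{n,n₁}` (roots of the characteristic polynomial
with multiplicity) are `0` with multiplicity `1`, `n - 2` with multiplicity
`n/2 - n₁`, and `n` with multiplicity `(n/2 + n₁) - 1`. -/
theorem roots_charpoly_lapMatrix_gammaGraph (n n₁ : ℕ) (hn : 4 ≤ n) (hev : Even n)
    (h1 : 1 ≤ n₁) (h2 : n₁ ≤ n / 2) :
    (SimpleGraph.lapMatrix ℝ (gammaGraph n n₁)).charpoly.roots =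
      Multiset.replicate 1 (0 : ℝ) + Multiset.replicate (n / 2 - n₁) ((n : ℝ) - 2) +
        Multiset.replicate (n / 2 + n₁ - 1) (n : ℝ) := by
  obtain ⟨m, hm⟩ := hev
  have hdiv : n / 2 = m := by omega
  have hm2 : 2 ≤ m := by omega
  have h2' : n₁ ≤ m := by omega
  rw [hdiv]
  subst hm
  haveI : NeZero m := ⟨by omega⟩
  -- the characteristic polynomial
  have hcp : (SimpleGraph.lapMatrix ℝ (gammaGraph (m + m) n₁)).charpoly =
      ((Finset.univ.val.map (d0 (m + m) m) + Finset.univ.val.map (d1 (m + m) n₁ m)).map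
        (fun a => X - C a)).prod := by
    rw [← Matrix.charpoly_reindex (finSumFinEquiv (m := m) (n := m)).symm,
      lap_reindex n₁ m h2' hm2,
      charpoly_conj' _ (Tm m) ((1/2 : ℝ) • Tm m)
        (Matrix.fromBlocks (B1 (m + m) m) 0 0 (Matrix.diagonal (d1 (m + m) n₁ m)))
        (block_conj (m + m) n₁ m) (Tm_mul_inv m) (inv_mul_Tm m),
      Matrix.charpoly_fromBlocks_zero₁₂,
      charpoly_conj' (B1 (m + m) m) (Qm m) (Qinv m) (Matrix.diagonal (d0 (m + m) m))
        (B1_mul_Qm (m + m) m rfl) (Qm_mul_Qinv m) (Qinv_mul_Qm m),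
      charpoly_diagonal', charpoly_diagonal']
    rw [Finset.prod_eq_multiset_prod, Finset.prod_eq_multiset_prod, Multiset.map_add,
      Multiset.prod_add, Multiset.map_map, Multiset.map_map]
    rfl
  rw [hcp, Polynomial.roots_multiset_prod_X_sub_C]
  -- counting the eigenvalues
  have e0 : (Finset.univ : Finset (Fin m)).val.map (d0 (m + m) m) =
      Multiset.replicate 1 (0 : ℝ) + Multiset.replicate (m - 1) ((m + m : ℕ) : ℝ) := by
    rw [← Multiset.filter_add_not (fun p : Fin m => p = 0) Finset.univ.val, Multiset.map_add]
    congr 1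
    · have h : Multiset.filter (fun p : Fin m => p = 0) Finset.univ.val = {(0 : Fin m)} := by
        rw [← Finset.filter_val, Finset.filter_eq', if_pos (Finset.mem_univ _)]
        rfl
      rw [h]
      simp [d0]
    · have h : Multiset.filter (fun p : Fin m => ¬ p = 0) Finset.univ.val =
          (Finset.univ.erase (0 : Fin m)).val := by
        rw [← Finset.filter_val]
        congr 1
        ext x
        simp
      rw [h, Multiset.map_congr rfl (fun x hx => show d0 (m + m) m x = ((m + m : ℕ) : ℝ) from by
          rw [d0, if_neg (Finset.mem_erase.mp (Finset.mem_val.mp hx)).1]), Multiset.map_const']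
      congr 1
      exact card_erase_zero m
  have hcard1 : (Finset.univ.filter (fun p : Fin m => (p : ℕ) < n₁)).card = n₁ := by
    have hm0 : 0 < m := by omega
    have key : (Finset.univ.filter (fun p : Fin m => (p : ℕ) < n₁)).card =
        (Finset.range n₁).card := by
      refine Finset.card_nbij' (fun a : Fin m => (a : ℕ))
        (fun b => (⟨b % m, Nat.mod_lt _ hm0⟩ : Fin m)) ?_ ?_ ?_ ?_
      · intro a ha
        exact Finset.mem_range.mpr (Finset.mem_filter.mp ha).2
      · intro b hb
        refine Finset.mem_filter.mpr ⟨Finset.mem_univ _, ?_⟩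
        have hb' := Finset.mem_range.mp hb
        show b % m < n₁
        rw [Nat.mod_eq_of_lt (by omega)]
        omega
      · intro a ha
        apply Fin.ext
        exact Nat.mod_eq_of_lt a.isLt
      · intro b hb
        have hb' := Finset.mem_range.mp hb
        exact Nat.mod_eq_of_lt (by omega)
    rw [key, Finset.card_range]
  have hcard2 : (Finset.univ.filter (fun p : Fin m => ¬ (p : ℕ) < n₁)).card = m - n₁ := by
    have := Finset.card_filter_add_card_filter_not
      (s := (Finset.univ : Finset (Fin m))) (p := fun p : Fin m => (p : ℕ) < n₁)
    rw [Finset.card_univ, Fintype.card_fin] at this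
    omega
  have e1 : (Finset.univ : Finset (Fin m)).val.map (d1 (m + m) n₁ m) =
      Multiset.replicate n₁ ((m + m : ℕ) : ℝ) +
        Multiset.replicate (m - n₁) (((m + m : ℕ) : ℝ) - 2) := by
    rw [← Multiset.filter_add_not (fun p : Fin m => (p : ℕ) < n₁) Finset.univ.val,
      Multiset.map_add]
    congr 1
    · rw [← Finset.filter_val,
        Multiset.map_congr rfl (fun x hx => show d1 (m + m) n₁ m x = ((m + m : ℕ) : ℝ) from by
          rw [d1, if_pos (Finset.mem_filter.mp (Finset.mem_val.mp hx)).2]), Multiset.map_const']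
      congr 1
    · rw [← Finset.filter_val,
        Multiset.map_congr rfl
          (fun x hx => show d1 (m + m) n₁ m x = ((m + m : ℕ) : ℝ) - 2 from by
            rw [d1, if_neg (Finset.mem_filter.mp (Finset.mem_val.mp hx)).2]),
        Multiset.map_const']
      congr 1
  rw [e0, e1, show m + n₁ - 1 = (m - 1) + n₁ from by omega, Multiset.replicate_add]
  abel
end

section
/- Let n ≥ 3 and n₁ be integers with 1 ≤ n₁ ≤ n − (n₁ + 1). The multiset of eigenvalues (roots of the characteristic polynomial, with multiplicity) of the Laplacian matrix L(Θ_{n,n₁}) is: 0 with multiplicity 1, 1 with multiplicity 1, n with multiplicity 1, n₁ + 1 with multiplicity n₁ − 1, and n − n₁ with multiplicity n − (n₁ + 2). -/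
open Finset Matrix Polynomial



/-- The graph `Θ_{n,n₁}` on `Fin n`: two cliques, one on the vertices `{0, …, n₁}` and
one on the vertices `{n₁, …, n-1}`, overlapping exactly in the cut vertex `n₁`. -/
def thetaGraph (n n₁ : ℕ) : SimpleGraph (Fin n) where
  Adj i j := i ≠ j ∧ (((i : ℕ) ≤ n₁ ∧ (j : ℕ) ≤ n₁) ∨ (n₁ ≤ (i : ℕ) ∧ n₁ ≤ (j : ℕ)))
  symm := ⟨fun _ _ ⟨h1, h2⟩ => ⟨h1.symm, h2.imp And.symm And.symm⟩⟩
  loopless := ⟨fun _ h => h.1 rfl⟩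

noncomputable instance (n n₁ : ℕ) : DecidableRel (thetaGraph n n₁).Adj :=
  fun _ _ => Classical.dec _

section defs
variable (n n₁ : ℕ)

def aF : ℕ → ℝ := fun i => if i ≤ n₁ then 1 else 0
def bF : ℕ → ℝ := fun i => if n₁ ≤ i then 1 else 0

def colF : ℕ → ℕ → ℝ := fun k i =>
  if k = 0 then 1
  else if k < n₁ then (if i < k then 1 else if i = k then -(k:ℝ) else 0)
  else if k = n₁ then
    (if i < n₁ then (n:ℝ)-(n₁:ℝ)-1 else if i = n₁ then 0 else -(n₁:ℝ))
  else if k = n₁+1 then (if i = n₁ then 1-(n:ℝ) else 1)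
  else (if i ≤ n₁ then 0 else if i < k then 1 else if i = k then -((k:ℝ)-(n₁:ℝ)-1) else 0)

def dF : ℕ → ℝ := fun k =>
  if k = 0 then 0 else if k < n₁ then (n₁:ℝ)+1 else if k = n₁ then 1
  else if k = n₁+1 then (n:ℝ) else (n:ℝ)-(n₁:ℝ)

def gF : ℕ → ℝ := fun k =>
  if k = 0 then (n:ℝ) else if k < n₁ then (k:ℝ)*((k:ℝ)+1)
  else if k = n₁ then (n₁:ℝ)*((n:ℝ)-(n₁:ℝ)-1)*((n:ℝ)-1)
  else if k = n₁+1 then (n:ℝ)*((n:ℝ)-1)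
  else ((k:ℝ)-(n₁:ℝ)-1)*((k:ℝ)-(n₁:ℝ))

end defs

lemma sum_piece1 (N p : ℕ) (hp : p < N) (f : ℕ → ℝ) (c₁ v c₂ : ℝ)
    (h₁ : ∀ i < p, f i = c₁) (h₂ : f p = v) (h₃ : ∀ i, p < i → i < N → f i = c₂) :
    ∑ i ∈ Finset.range N, f i = p * c₁ + v + ((N:ℝ) - p - 1) * c₂ := by
  rw [Finset.range_eq_Ico,
    ← Finset.sum_Ico_consecutive f (Nat.zero_le p) (le_of_lt hp),
    ← Finset.sum_Ico_consecutive f (Nat.le_succ p) hp]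
  rw [Finset.sum_congr rfl (fun i hi => h₁ i (Finset.mem_Ico.1 hi).2),
    Finset.sum_congr rfl (fun i hi => h₃ i (Finset.mem_Ico.1 hi).1 (Finset.mem_Ico.1 hi).2),
    Nat.Ico_succ_singleton, Finset.sum_singleton, h₂,
    Finset.sum_const, Finset.sum_const, Nat.card_Ico, Nat.card_Ico, Nat.sub_zero]
  simp only [nsmul_eq_mul, Nat.succ_eq_add_one, Nat.cast_sub (by omega : p + 1 ≤ N)]
  push_cast
  ring

lemma sum_piece2 (N p q : ℕ) (hpq : p < q) (hq : q < N) (f : ℕ → ℝ) (c₁ v₁ c₂ v₂ c₃ : ℝ)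
    (h₁ : ∀ i < p, f i = c₁) (h₂ : f p = v₁) (h₃ : ∀ i, p < i → i < q → f i = c₂)
    (h₄ : f q = v₂) (h₅ : ∀ i, q < i → i < N → f i = c₃) :
    ∑ i ∈ Finset.range N, f i
      = p * c₁ + v₁ + ((q:ℝ) - p - 1) * c₂ + v₂ + ((N:ℝ) - q - 1) * c₃ := by
  rw [Finset.range_eq_Ico,
    ← Finset.sum_Ico_consecutive f (Nat.zero_le q) (le_of_lt hq),
    ← Finset.sum_Ico_consecutive f (Nat.le_succ q) hq,
    ← Finset.range_eq_Ico, sum_piece1 q p hpq f c₁ v₁ c₂ h₁ h₂ h₃,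
    Finset.sum_congr rfl (fun i hi => h₅ i (Finset.mem_Ico.1 hi).1 (Finset.mem_Ico.1 hi).2),
    Nat.Ico_succ_singleton, Finset.sum_singleton, h₄,
    Finset.sum_const, Nat.card_Ico]
  simp only [nsmul_eq_mul, Nat.succ_eq_add_one, Nat.cast_sub (by omega : q + 1 ≤ N)]
  push_cast
  ring

lemma sum_const' (N : ℕ) (f : ℕ → ℝ) (c : ℝ) (h : ∀ i < N, f i = c) :
    ∑ i ∈ Finset.range N, f i = N * c := by
  rw [Finset.sum_congr rfl (fun i hi => h i (Finset.mem_range.1 hi)), Finset.sum_const,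
    Finset.card_range, nsmul_eq_mul]

section main
variable {n n₁ : ℕ}

set_option maxHeartbeats 4000000 in
lemma gram_le (hn : 3 ≤ n) (h1 : 1 ≤ n₁) (h2 : 2*n₁ + 1 ≤ n)
    (k l : ℕ) (hk : k < n) (hl : l < n) (hkl : k ≤ l) :
    ∑ i ∈ Finset.range n, colF n n₁ k i * colF n n₁ l i
      = if k = l then gF n n₁ k else 0 := by
  have hn1 : n₁ + 1 < n := by omega
  rcases eq_or_ne k l with rfl | hne
  · -- diagonal entries
    rw [if_pos rfl]
    rcases Nat.eq_zero_or_pos k with rfl | hk0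
    · rw [sum_const' n (fun i => colF n n₁ 0 i * colF n n₁ 0 i) 1 (fun i hi => by simp [colF])]
      simp [gF]
    · by_cases hkn1 : k < n₁
      · rw [sum_piece1 n k (by omega) (fun i => colF n n₁ k i * colF n n₁ k i) 1 ((-(k:ℝ))*(-(k:ℝ))) 0
          (fun i hi => by simp only [colF]; split_ifs <;> first | omega | contradiction | norm_num | ring)
          (by simp only [colF]; split_ifs <;> first | omega | contradiction | norm_num | ring)
          (fun i hi hi' => by simp only [colF]; split_ifs <;> first | omega | contradiction | norm_num | ring)]
        simp only [gF]
        split_ifs <;> first | omega | contradiction | (push_cast; ring)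
      · by_cases hkeq : k = n₁
        · rw [sum_piece1 n n₁ (by omega) (fun i => colF n n₁ k i * colF n n₁ k i) (((n:ℝ)-n₁-1)*((n:ℝ)-n₁-1)) 0 ((-(n₁:ℝ))*(-(n₁:ℝ)))
            (fun i hi => by simp only [colF, hkeq]; split_ifs <;> first | omega | contradiction | norm_num | ring)
            (by simp only [colF, hkeq]; split_ifs <;> first | omega | contradiction | norm_num | ring)
            (fun i hi hi' => by simp only [colF, hkeq]; split_ifs <;> first | omega | contradiction | norm_num | ring)]
          simp only [gF]
          split_ifs <;> first | omega | (subst hkeq; push_cast; ring)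
        · by_cases hk2 : k = n₁ + 1
          · rw [sum_piece1 n n₁ (by omega) (fun i => colF n n₁ k i * colF n n₁ k i) 1 ((1-(n:ℝ))*(1-(n:ℝ))) 1
              (fun i hi => by simp only [colF, hk2]; split_ifs <;> first | omega | contradiction | norm_num | ring)
              (by simp only [colF, hk2]; split_ifs <;> first | omega | contradiction | norm_num | ring)
              (fun i hi hi' => by simp only [colF, hk2]; split_ifs <;> first | omega | contradiction | norm_num | ring)]
            simp only [gF]
            split_ifs <;> first | omega | (subst hk2; push_cast; ring)
          · have hk3 : n₁ + 1 < k := by omega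
            rw [sum_piece2 n n₁ k (by omega) (by omega) (fun i => colF n n₁ k i * colF n n₁ k i) 0 0 1
                ((-((k:ℝ)-(n₁:ℝ)-1))*(-((k:ℝ)-(n₁:ℝ)-1))) 0
              (fun i hi => by simp only [colF]; split_ifs <;> first | omega | contradiction | norm_num | ring)
              (by simp only [colF]; split_ifs <;> first | omega | contradiction | norm_num | ring)
              (fun i hi hi' => by simp only [colF]; split_ifs <;> first | omega | contradiction | norm_num | ring)
              (by simp only [colF]; split_ifs <;> first | omega | ring | norm_num)
              (fun i hi hi' => by simp only [colF]; split_ifs <;> first | omega | contradiction | norm_num | ring)]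
            simp only [gF]
            split_ifs <;> first | omega | contradiction | (push_cast; ring)
  · -- off-diagonal entries, k < l
    rw [if_neg hne]
    have hkl' : k < l := lt_of_le_of_ne hkl hne
    have tac0 : k = 0 ∨ (1 ≤ k ∧ k < n₁) ∨ k = n₁ ∨ k = n₁ + 1 ∨ n₁ + 1 < k := by omega
    by_cases hln1 : l < n₁
    · -- l in the w-range, so k = 0 or 1 ≤ k < l < n₁
      rcases Nat.eq_zero_or_pos k with rfl | hk0
      · rw [sum_piece1 n l (by omega) (fun i => colF n n₁ 0 i * colF n n₁ l i) 1 (-(l:ℝ)) 0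
          (fun i hi => by simp only [colF]; split_ifs <;> first | omega | contradiction | norm_num | ring)
          (by simp only [colF]; split_ifs <;> first | omega | contradiction | norm_num | ring)
          (fun i hi hi' => by simp only [colF]; split_ifs <;> first | omega | contradiction | norm_num | ring)]
        ring
      · rw [sum_piece2 n k l (by omega) (by omega) (fun i => colF n n₁ k i * colF n n₁ l i) 1 (-(k:ℝ)) 0 0 0
          (fun i hi => by simp only [colF]; split_ifs <;> first | omega | contradiction | norm_num | ring)
          (by simp only [colF]; split_ifs <;> first | omega | contradiction | norm_num | ring)
          (fun i hi hi' => by simp only [colF]; split_ifs <;> first | omega | contradiction | norm_num | ring)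
          (by simp only [colF]; split_ifs <;> first | omega | contradiction | norm_num | ring)
          (fun i hi hi' => by simp only [colF]; split_ifs <;> first | omega | contradiction | norm_num | ring)]
        ring
    · by_cases hleq : l = n₁
      · -- l = n₁, k = 0 or 1 ≤ k < n₁
        rcases Nat.eq_zero_or_pos k with rfl | hk0
        · rw [sum_piece1 n n₁ (by omega) (fun i => colF n n₁ 0 i * colF n n₁ l i) ((n:ℝ)-(n₁:ℝ)-1) 0 (-(n₁:ℝ))
            (fun i hi => by simp only [colF, hleq]; split_ifs <;> first | omega | contradiction | norm_num | ring)
            (by simp only [colF, hleq]; split_ifs <;> first | omega | contradiction | norm_num | ring)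
            (fun i hi hi' => by simp only [colF, hleq]; split_ifs <;> first | omega | contradiction | norm_num | ring)]
          ring
        · rw [sum_piece2 n k n₁ (by omega) (by omega) (fun i => colF n n₁ k i * colF n n₁ l i) ((n:ℝ)-(n₁:ℝ)-1)
              ((-(k:ℝ))*((n:ℝ)-(n₁:ℝ)-1)) 0 0 0
            (fun i hi => by simp only [colF, hleq]; split_ifs <;> first | omega | contradiction | norm_num | ring)
            (by simp only [colF, hleq]; split_ifs <;> first | omega | contradiction | norm_num | ring)
            (fun i hi hi' => by simp only [colF, hleq]; split_ifs <;> first | omega | contradiction | norm_num | ring)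
            (by simp only [colF, hleq]; split_ifs <;> first | omega | contradiction | norm_num | ring)
            (fun i hi hi' => by simp only [colF, hleq]; split_ifs <;> first | omega | contradiction | norm_num | ring)]
          ring
      · by_cases hleq2 : l = n₁ + 1
        · -- l = n₁ + 1, k = 0 or 1 ≤ k < n₁ or k = n₁
          rcases tac0 with rfl | ⟨hk0, hkn1⟩ | hkeq | hkeq | hkgt
          · rw [sum_piece1 n n₁ (by omega) (fun i => colF n n₁ 0 i * colF n n₁ l i) 1 (1-(n:ℝ)) 1
              (fun i hi => by simp only [colF, hleq2]; split_ifs <;> first | omega | contradiction | norm_num | ring)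
              (by simp only [colF, hleq2]; split_ifs <;> first | omega | contradiction | norm_num | ring)
              (fun i hi hi' => by simp only [colF, hleq2]; split_ifs <;> first | omega | contradiction | norm_num | ring)]
            ring
          · rw [sum_piece2 n k n₁ (by omega) (by omega) (fun i => colF n n₁ k i * colF n n₁ l i) 1 (-(k:ℝ)) 0 0 0
              (fun i hi => by simp only [colF, hleq2]; split_ifs <;> first | omega | contradiction | norm_num | ring)
              (by simp only [colF, hleq2]; split_ifs <;> first | omega | contradiction | norm_num | ring)
              (fun i hi hi' => by simp only [colF, hleq2]; split_ifs <;> first | omega | contradiction | norm_num | ring)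
              (by simp only [colF, hleq2]; split_ifs <;> first | omega | contradiction | norm_num | ring)
              (fun i hi hi' => by simp only [colF, hleq2]; split_ifs <;> first | omega | contradiction | norm_num | ring)]
            ring
          · rw [sum_piece1 n n₁ (by omega) (fun i => colF n n₁ k i * colF n n₁ l i) ((n:ℝ)-(n₁:ℝ)-1) 0 (-(n₁:ℝ))
              (fun i hi => by simp only [colF, hleq2, hkeq]; split_ifs <;> first | omega | contradiction | norm_num | ring)
              (by simp only [colF, hleq2, hkeq]; split_ifs <;> first | omega | contradiction | norm_num | ring)
              (fun i hi hi' => by simp only [colF, hleq2, hkeq]; split_ifs <;> first | omega | contradiction | norm_num | ring)]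
            ring
          · omega
          · omega
        · -- l ≥ n₁ + 2
          have hl3 : n₁ + 1 < l := by omega
          rcases tac0 with rfl | ⟨hk0, hkn1⟩ | hkeq | hkeq | hkgt
          · rw [sum_piece2 n n₁ l (by omega) (by omega) (fun i => colF n n₁ 0 i * colF n n₁ l i) 0 0 1 (-((l:ℝ)-(n₁:ℝ)-1)) 0
              (fun i hi => by simp only [colF]; split_ifs <;> first | omega | contradiction | norm_num | ring)
              (by simp only [colF]; split_ifs <;> first | omega | contradiction | norm_num | ring)
              (fun i hi hi' => by simp only [colF]; split_ifs <;> first | omega | contradiction | norm_num | ring)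
              (by simp only [colF]; split_ifs <;> first | omega | contradiction | norm_num | ring)
              (fun i hi hi' => by simp only [colF]; split_ifs <;> first | omega | contradiction | norm_num | ring)]
            ring
          · rw [sum_const' n (fun i => colF n n₁ k i * colF n n₁ l i) 0
              (fun i hi => by simp only [colF]; split_ifs <;> first | omega | contradiction | norm_num | ring)]
            ring
          · rw [sum_piece2 n n₁ l (by omega) (by omega) (fun i => colF n n₁ k i * colF n n₁ l i) 0 0 (-(n₁:ℝ))
                ((-(n₁:ℝ))*(-((l:ℝ)-(n₁:ℝ)-1))) 0
              (fun i hi => by simp only [colF, hkeq]; split_ifs <;> first | omega | contradiction | norm_num | ring)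
              (by simp only [colF, hkeq]; split_ifs <;> first | omega | contradiction | norm_num | ring)
              (fun i hi hi' => by simp only [colF, hkeq]; split_ifs <;> first | omega | contradiction | norm_num | ring)
              (by simp only [colF, hkeq]; split_ifs <;> first | omega | contradiction | norm_num | ring)
              (fun i hi hi' => by simp only [colF, hkeq]; split_ifs <;> first | omega | contradiction | norm_num | ring)]
            ring
          · rw [sum_piece2 n n₁ l (by omega) (by omega) (fun i => colF n n₁ k i * colF n n₁ l i) 0 0 1 (-((l:ℝ)-(n₁:ℝ)-1)) 0
              (fun i hi => by simp only [colF, hkeq]; split_ifs <;> first | omega | contradiction | norm_num | ring)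
              (by simp only [colF, hkeq]; split_ifs <;> first | omega | contradiction | norm_num | ring)
              (fun i hi hi' => by simp only [colF, hkeq]; split_ifs <;> first | omega | contradiction | norm_num | ring)
              (by simp only [colF, hkeq]; split_ifs <;> first | omega | contradiction | norm_num | ring)
              (fun i hi hi' => by simp only [colF, hkeq]; split_ifs <;> first | omega | contradiction | norm_num | ring)]
            ring
          · rw [sum_piece2 n n₁ k (by omega) (by omega) (fun i => colF n n₁ k i * colF n n₁ l i) 0 0 1 (-((k:ℝ)-(n₁:ℝ)-1)) 0
              (fun i hi => by simp only [colF]; split_ifs <;> first | omega | contradiction | norm_num | ring)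
              (by simp only [colF]; split_ifs <;> first | omega | contradiction | norm_num | ring)
              (fun i hi hi' => by simp only [colF]; split_ifs <;> first | omega | contradiction | norm_num | ring)
              (by simp only [colF]; split_ifs <;> first | omega | contradiction | norm_num | ring)
              (fun i hi hi' => by simp only [colF]; split_ifs <;> first | omega | contradiction | norm_num | ring)]
            ring

end main

-- ===================== adjacency / degree / Laplacian structure =====================

lemma theta_adj {n n₁ : ℕ} (i j : Fin n) :
    (thetaGraph n n₁).Adj i j ↔
      ((i:ℕ) ≠ (j:ℕ) ∧ (((i:ℕ) ≤ n₁ ∧ (j:ℕ) ≤ n₁) ∨ (n₁ ≤ (i:ℕ) ∧ n₁ ≤ (j:ℕ)))) := by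
  constructor
  · rintro ⟨h, h'⟩
    exact ⟨fun he => h (Fin.ext he), h'⟩
  · rintro ⟨h, h'⟩
    exact ⟨fun he => h (congrArg Fin.val he), h'⟩

set_option maxHeartbeats 1000000 in
lemma theta_deg {n n₁ : ℕ} (hn : 3 ≤ n) (h1 : 1 ≤ n₁) (h2 : 2*n₁+1 ≤ n) (i : Fin n) :
    (((thetaGraph n n₁).degree i : ℝ))
      = if (i:ℕ) < n₁ then (n₁:ℝ) else if (i:ℕ) = n₁ then (n:ℝ)-1 else (n:ℝ)-(n₁:ℝ)-1 := by
  have hi := i.isLt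
  rw [SimpleGraph.degree_eq_sum_if_adj]
  rw [Finset.sum_congr rfl (fun j _ => by
    simp only [theta_adj] :
    ∀ j ∈ Finset.univ, (if (thetaGraph n n₁).Adj i j then (1:ℝ) else 0)
      = (fun t => if (((i:ℕ) ≠ t) ∧ (((i:ℕ) ≤ n₁ ∧ t ≤ n₁) ∨ (n₁ ≤ (i:ℕ) ∧ n₁ ≤ t)))
          then (1:ℝ) else 0) (j:ℕ))]
  rw [Fin.sum_univ_eq_sum_range
    (fun t => if (((i:ℕ) ≠ t) ∧ (((i:ℕ) ≤ n₁ ∧ t ≤ n₁) ∨ (n₁ ≤ (i:ℕ) ∧ n₁ ≤ t)))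
      then (1:ℝ) else 0) n]
  by_cases hi1 : (i:ℕ) < n₁
  · rw [if_pos hi1]
    rw [sum_piece2 n (i:ℕ) n₁ (by omega) (by omega) _ 1 0 1 1 0
      (fun t ht => by split_ifs <;> first | omega | contradiction | norm_num)
      (by split_ifs <;> first | omega | contradiction | norm_num)
      (fun t ht ht' => by split_ifs <;> first | omega | contradiction | norm_num)
      (by split_ifs <;> first | omega | contradiction | norm_num)
      (fun t ht ht' => by split_ifs <;> first | omega | contradiction | norm_num)]
    ring
  · by_cases hi2 : (i:ℕ) = n₁
    · rw [if_neg hi1, if_pos hi2]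
      rw [sum_piece1 n n₁ (by omega) _ 1 0 1
        (fun t ht => by split_ifs <;> first | omega | contradiction | norm_num)
        (by split_ifs <;> first | omega | contradiction | norm_num)
        (fun t ht ht' => by split_ifs <;> first | omega | contradiction | norm_num)]
      ring
    · rw [if_neg hi1, if_neg hi2]
      rw [sum_piece2 n n₁ (i:ℕ) (by omega) (by omega) _ 0 1 1 0 1
        (fun t ht => by split_ifs <;> first | omega | contradiction | norm_num)
        (by split_ifs <;> first | omega | contradiction | norm_num)
        (fun t ht ht' => by split_ifs <;> first | omega | contradiction | norm_num)
        (by split_ifs <;> first | omega | contradiction | norm_num)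
        (fun t ht ht' => by split_ifs <;> first | omega | contradiction | norm_num)]
      ring

set_option maxHeartbeats 1000000 in
lemma lap_eq {n n₁ : ℕ} (hn : 3 ≤ n) (h1 : 1 ≤ n₁) (h2 : 2*n₁+1 ≤ n) :
    (thetaGraph n n₁).lapMatrix ℝ =
      ((n₁:ℝ)+1) • Matrix.diagonal (fun i : Fin n => aF n₁ (i:ℕ))
        - Matrix.vecMulVec (fun i : Fin n => aF n₁ (i:ℕ)) (fun i : Fin n => aF n₁ (i:ℕ))
        + (((n:ℝ)-(n₁:ℝ)) • Matrix.diagonal (fun i : Fin n => bF n₁ (i:ℕ))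
        - Matrix.vecMulVec (fun i : Fin n => bF n₁ (i:ℕ)) (fun i : Fin n => bF n₁ (i:ℕ))) := by
  ext i j
  simp only [SimpleGraph.lapMatrix, SimpleGraph.degMatrix, Matrix.sub_apply, Matrix.add_apply,
    Matrix.smul_apply, SimpleGraph.adjMatrix_apply, Matrix.diagonal_apply,
    Matrix.vecMulVec_apply, smul_eq_mul]
  by_cases hij : i = j
  · subst hij
    rw [if_pos rfl, if_pos rfl, if_pos rfl, theta_deg hn h1 h2 i,
      if_neg ((thetaGraph n n₁).irrefl)]
    unfold aF bF
    split_ifs <;> first | omega | contradiction | (push_cast; ring)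
  · have hij' : (i:ℕ) ≠ (j:ℕ) := fun h => hij (Fin.ext h)
    rw [if_neg hij, if_neg hij, if_neg hij]
    simp only [theta_adj]
    unfold aF bF
    split_ifs <;> first | omega | contradiction | norm_num

lemma vecMulVec_mulVec {n : ℕ} (a b v : Fin n → ℝ) :
    Matrix.vecMulVec a b *ᵥ v = (b ⬝ᵥ v) • a := by
  funext i
  simp only [Matrix.mulVec, dotProduct, Matrix.vecMulVec_apply, Pi.smul_apply,
    smul_eq_mul]
  rw [Finset.sum_congr rfl (fun j _ => by ring :
    ∀ j ∈ Finset.univ, a i * b j * v j = a i * (b j * v j)), ← Finset.mul_sum]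
  ring

lemma lap_mulVec {n n₁ : ℕ} (hn : 3 ≤ n) (h1 : 1 ≤ n₁) (h2 : 2*n₁+1 ≤ n) (v : Fin n → ℝ) :
    (thetaGraph n n₁).lapMatrix ℝ *ᵥ v
      = ((n₁:ℝ)+1) • ((fun i : Fin n => aF n₁ (i:ℕ)) * v)
        - ((fun i : Fin n => aF n₁ (i:ℕ)) ⬝ᵥ v) • (fun i : Fin n => aF n₁ (i:ℕ))
        + (((n:ℝ)-(n₁:ℝ)) • ((fun i : Fin n => bF n₁ (i:ℕ)) * v)
        - ((fun i : Fin n => bF n₁ (i:ℕ)) ⬝ᵥ v) • (fun i : Fin n => bF n₁ (i:ℕ))) := by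
  have hdiag : ∀ w v' : Fin n → ℝ, Matrix.diagonal w *ᵥ v' = w * v' := by
    intro w v'; funext i; rw [Matrix.mulVec_diagonal]; rfl
  rw [lap_eq hn h1 h2, Matrix.add_mulVec, Matrix.sub_mulVec, Matrix.sub_mulVec,
    Matrix.smul_mulVec, Matrix.smul_mulVec, vecMulVec_mulVec, vecMulVec_mulVec,
    hdiag, hdiag]

-- ===================== the eigenvector equations =====================

set_option maxHeartbeats 4000000 in
lemma col_action {n n₁ : ℕ} (hn : 3 ≤ n) (h1 : 1 ≤ n₁) (h2 : 2*n₁+1 ≤ n)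
    (k : ℕ) (hk : k < n) :
    (thetaGraph n n₁).lapMatrix ℝ *ᵥ (fun i : Fin n => colF n n₁ k (i:ℕ))
      = fun i : Fin n => dF n n₁ k * colF n n₁ k (i:ℕ) := by
  have hn1 : n₁ + 1 < n := by omega
  rw [lap_mulVec hn h1 h2]
  have hda : (fun i : Fin n => aF n₁ (i:ℕ)) ⬝ᵥ (fun i : Fin n => colF n n₁ k (i:ℕ))
      = ∑ t ∈ Finset.range n, aF n₁ t * colF n n₁ k t := by
    exact Fin.sum_univ_eq_sum_range (fun t => aF n₁ t * colF n n₁ k t) n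
  have hdb : (fun i : Fin n => bF n₁ (i:ℕ)) ⬝ᵥ (fun i : Fin n => colF n n₁ k (i:ℕ))
      = ∑ t ∈ Finset.range n, bF n₁ t * colF n n₁ k t := by
    exact Fin.sum_univ_eq_sum_range (fun t => bF n₁ t * colF n n₁ k t) n
  have tac0 : k = 0 ∨ (1 ≤ k ∧ k < n₁) ∨ k = n₁ ∨ k = n₁ + 1 ∨ n₁ + 1 < k := by omega
  rcases tac0 with rfl | ⟨hk0, hkn1⟩ | hkeq | hkeq | hkgt
  · rw [hda, hdb,
      sum_piece1 n n₁ (by omega) (fun t => aF n₁ t * colF n n₁ 0 t) 1 1 0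
        (fun t ht => by simp only [aF, colF]; split_ifs <;> first | omega | contradiction | norm_num)
        (by simp only [aF, colF]; split_ifs <;> first | omega | contradiction | norm_num)
        (fun t ht ht' => by simp only [aF, colF]; split_ifs <;> first | omega | contradiction | norm_num),
      sum_piece1 n n₁ (by omega) (fun t => bF n₁ t * colF n n₁ 0 t) 0 1 1
        (fun t ht => by simp only [bF, colF]; split_ifs <;> first | omega | contradiction | norm_num)
        (by simp only [bF, colF]; split_ifs <;> first | omega | contradiction | norm_num)
        (fun t ht ht' => by simp only [bF, colF]; split_ifs <;> first | omega | contradiction | norm_num)]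
    funext i
    simp only [Pi.add_apply, Pi.sub_apply, Pi.smul_apply, Pi.mul_apply, smul_eq_mul]
    unfold aF bF colF dF
    split_ifs <;> first | omega | contradiction | (push_cast; ring)
  · rw [hda, hdb,
      sum_piece1 n k (by omega) (fun t => aF n₁ t * colF n n₁ k t) 1 (-(k:ℝ)) 0
        (fun t ht => by simp only [aF, colF]; split_ifs <;> first | omega | contradiction | norm_num)
        (by simp only [aF, colF]; split_ifs <;> first | omega | contradiction | norm_num)
        (fun t ht ht' => by simp only [aF, colF]; split_ifs <;> first | omega | contradiction | norm_num),
      sum_const' n (fun t => bF n₁ t * colF n n₁ k t) 0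
        (fun t ht => by simp only [bF, colF]; split_ifs <;> first | omega | contradiction | norm_num)]
    funext i
    simp only [Pi.add_apply, Pi.sub_apply, Pi.smul_apply, Pi.mul_apply, smul_eq_mul]
    unfold aF bF colF dF
    split_ifs <;> first | omega | contradiction | (push_cast; ring)
  · rw [hda, hdb,
      sum_piece1 n n₁ (by omega) (fun t => aF n₁ t * colF n n₁ k t) ((n:ℝ)-(n₁:ℝ)-1) 0 0
        (fun t ht => by simp only [aF, colF, hkeq]; split_ifs <;> first | omega | contradiction | norm_num)
        (by simp only [aF, colF, hkeq]; split_ifs <;> first | omega | contradiction | norm_num)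
        (fun t ht ht' => by simp only [aF, colF, hkeq]; split_ifs <;> first | omega | contradiction | norm_num),
      sum_piece1 n n₁ (by omega) (fun t => bF n₁ t * colF n n₁ k t) 0 0 (-(n₁:ℝ))
        (fun t ht => by simp only [bF, colF, hkeq]; split_ifs <;> first | omega | contradiction | norm_num)
        (by simp only [bF, colF, hkeq]; split_ifs <;> first | omega | contradiction | norm_num)
        (fun t ht ht' => by simp only [bF, colF, hkeq]; split_ifs <;> first | omega | contradiction | norm_num)]
    funext i
    simp only [Pi.add_apply, Pi.sub_apply, Pi.smul_apply, Pi.mul_apply, smul_eq_mul]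
    unfold aF bF colF dF
    subst hkeq
    split_ifs <;> first | omega | contradiction | (push_cast; ring)
  · rw [hda, hdb,
      sum_piece1 n n₁ (by omega) (fun t => aF n₁ t * colF n n₁ k t) 1 (1-(n:ℝ)) 0
        (fun t ht => by simp only [aF, colF, hkeq]; split_ifs <;> first | omega | contradiction | norm_num)
        (by simp only [aF, colF, hkeq]; split_ifs <;> first | omega | contradiction | norm_num)
        (fun t ht ht' => by simp only [aF, colF, hkeq]; split_ifs <;> first | omega | contradiction | norm_num),
      sum_piece1 n n₁ (by omega) (fun t => bF n₁ t * colF n n₁ k t) 0 (1-(n:ℝ)) 1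
        (fun t ht => by simp only [bF, colF, hkeq]; split_ifs <;> first | omega | contradiction | norm_num)
        (by simp only [bF, colF, hkeq]; split_ifs <;> first | omega | contradiction | norm_num)
        (fun t ht ht' => by simp only [bF, colF, hkeq]; split_ifs <;> first | omega | contradiction | norm_num)]
    funext i
    simp only [Pi.add_apply, Pi.sub_apply, Pi.smul_apply, Pi.mul_apply, smul_eq_mul]
    unfold aF bF colF dF
    subst hkeq
    split_ifs <;> first | omega | contradiction | (push_cast; ring)
  · rw [hda, hdb,
      sum_const' n (fun t => aF n₁ t * colF n n₁ k t) 0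
        (fun t ht => by simp only [aF, colF]; split_ifs <;> first | omega | contradiction | norm_num),
      sum_piece2 n n₁ k (by omega) (by omega) (fun t => bF n₁ t * colF n n₁ k t) 0 0 1
          (-((k:ℝ)-(n₁:ℝ)-1)) 0
        (fun t ht => by simp only [bF, colF]; split_ifs <;> first | omega | contradiction | norm_num)
        (by simp only [bF, colF]; split_ifs <;> first | omega | contradiction | norm_num)
        (fun t ht ht' => by simp only [bF, colF]; split_ifs <;> first | omega | contradiction | norm_num)
        (by simp only [bF, colF]; split_ifs <;> first | omega | contradiction | norm_num | ring)
        (fun t ht ht' => by simp only [bF, colF]; split_ifs <;> first | omega | contradiction | norm_num)]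
    funext i
    simp only [Pi.add_apply, Pi.sub_apply, Pi.smul_apply, Pi.mul_apply, smul_eq_mul]
    unfold aF bF colF dF
    split_ifs <;> first | omega | contradiction | (push_cast; ring)

-- ===================== the similarity and the characteristic polynomial =====================

def Pmat (n n₁ : ℕ) : Matrix (Fin n) (Fin n) ℝ :=
  Matrix.of fun i k : Fin n => colF n n₁ (k:ℕ) (i:ℕ)

def Dmat (n n₁ : ℕ) : Matrix (Fin n) (Fin n) ℝ :=
  Matrix.diagonal fun k : Fin n => dF n n₁ (k:ℕ)

lemma lap_mul_Pmat {n n₁ : ℕ} (hn : 3 ≤ n) (h1 : 1 ≤ n₁) (h2 : 2*n₁+1 ≤ n) :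
    (thetaGraph n n₁).lapMatrix ℝ * Pmat n n₁ = Pmat n n₁ * Dmat n n₁ := by
  ext i k
  rw [Dmat, Matrix.mul_diagonal, Matrix.mul_apply]
  have h := congrFun (col_action hn h1 h2 (k:ℕ) k.isLt) i
  simp only [Matrix.mulVec, dotProduct] at h
  simp only [Pmat, Matrix.of_apply]
  rw [h]
  ring

lemma gram_Pmat {n n₁ : ℕ} (hn : 3 ≤ n) (h1 : 1 ≤ n₁) (h2 : 2*n₁+1 ≤ n) :
    (Pmat n n₁)ᵀ * Pmat n n₁ = Matrix.diagonal fun k : Fin n => gF n n₁ (k:ℕ) := by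
  ext k l
  rw [Matrix.mul_apply, Matrix.diagonal_apply]
  simp only [Pmat, Matrix.transpose_apply, Matrix.of_apply]
  have base : ∀ x y : Fin n, (x:ℕ) ≤ (y:ℕ) →
      (∑ i : Fin n, colF n n₁ (x:ℕ) (i:ℕ) * colF n n₁ (y:ℕ) (i:ℕ))
        = if (x:ℕ) = (y:ℕ) then gF n n₁ (x:ℕ) else 0 := by
    intro x y hxy
    rw [Fin.sum_univ_eq_sum_range (fun t => colF n n₁ (x:ℕ) t * colF n n₁ (y:ℕ) t) n]
    exact gram_le hn h1 h2 (x:ℕ) (y:ℕ) x.isLt y.isLt hxy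
  rcases eq_or_ne k l with rfl | hne
  · rw [base k k le_rfl, if_pos rfl, if_pos rfl]
  · have hne' : (k:ℕ) ≠ (l:ℕ) := fun h => hne (Fin.ext h)
    rw [if_neg hne]
    rcases le_total (k:ℕ) (l:ℕ) with h | h
    · rw [base k l h, if_neg hne']
    · rw [Finset.sum_congr rfl (fun i _ => mul_comm _ _), base l k h, if_neg (Ne.symm hne')]

lemma gF_ne_zero {n n₁ : ℕ} (hn : 3 ≤ n) (h1 : 1 ≤ n₁) (h2 : 2*n₁+1 ≤ n)
    (k : ℕ) (hk : k < n) : gF n n₁ k ≠ 0 := by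
  have c1 : (1:ℝ) ≤ (n₁:ℝ) := by exact_mod_cast h1
  have c2 : 2*(n₁:ℝ)+1 ≤ (n:ℝ) := by exact_mod_cast h2
  unfold gF
  split_ifs with e1 e2 e3 e4
  · exact ne_of_gt (by linarith)
  · have : (1:ℝ) ≤ (k:ℝ) := by
      have : 1 ≤ k := by omega
      exact_mod_cast this
    exact ne_of_gt (by nlinarith)
  · exact ne_of_gt (mul_pos (mul_pos (by linarith) (by linarith)) (by linarith))
  · exact ne_of_gt (mul_pos (by linarith) (by linarith))
  · have : (n₁:ℝ)+2 ≤ (k:ℝ) := by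
      have : n₁ + 2 ≤ k := by omega
      exact_mod_cast this
    exact ne_of_gt (mul_pos (by linarith) (by linarith))

lemma det_Pmat_ne_zero {n n₁ : ℕ} (hn : 3 ≤ n) (h1 : 1 ≤ n₁) (h2 : 2*n₁+1 ≤ n) :
    (Pmat n n₁).det ≠ 0 := by
  have hsq : (Pmat n n₁).det * (Pmat n n₁).det = ∏ k : Fin n, gF n n₁ (k:ℕ) := by
    have h := congrArg Matrix.det (gram_Pmat hn h1 h2)
    rw [Matrix.det_mul, Matrix.det_transpose, Matrix.det_diagonal] at h
    exact h
  intro h0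
  rw [h0, mul_zero] at hsq
  exact (Finset.prod_ne_zero_iff.2 fun k _ => gF_ne_zero hn h1 h2 k.1 k.isLt) hsq.symm

lemma charpoly_lap_eq {n n₁ : ℕ} (hn : 3 ≤ n) (h1 : 1 ≤ n₁) (h2 : 2*n₁+1 ≤ n) :
    ((thetaGraph n n₁).lapMatrix ℝ).charpoly = (Dmat n n₁).charpoly := by
  have hcm : ((thetaGraph n n₁).lapMatrix ℝ).charmatrix * (Pmat n n₁).map Polynomial.C
      = (Pmat n n₁).map Polynomial.C * (Dmat n n₁).charmatrix := by
    unfold Matrix.charmatrix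
    rw [Matrix.sub_mul, Matrix.mul_sub]
    congr 1
    · exact ((Matrix.scalar_commute (Polynomial.X : ℝ[X])
        (fun r => Commute.all _ _) ((Pmat n n₁).map Polynomial.C)).eq)
    · rw [RingHom.mapMatrix_apply, RingHom.mapMatrix_apply, ← Matrix.map_mul, ← Matrix.map_mul,
        lap_mul_Pmat hn h1 h2]
  have hd : ((Pmat n n₁).map (Polynomial.C : ℝ →+* ℝ[X])).det ≠ 0 := by
    rw [show (Pmat n n₁).map (Polynomial.C : ℝ →+* ℝ[X])
        = (Polynomial.C : ℝ →+* ℝ[X]).mapMatrix (Pmat n n₁) from rfl, ← RingHom.map_det]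
    simpa using det_Pmat_ne_zero hn h1 h2
  have h := congrArg Matrix.det hcm
  rw [Matrix.det_mul, Matrix.det_mul, mul_comm (((thetaGraph n n₁).lapMatrix ℝ).charmatrix.det)]
    at h
  unfold Matrix.charpoly
  exact mul_left_cancel₀ hd h

-- ===================== the multiset of roots =====================

lemma dF0 {n n₁ : ℕ} : dF n n₁ 0 = 0 := by
  unfold dF; rw [if_pos rfl]

lemma dFn₁ {n n₁ : ℕ} (h1 : 1 ≤ n₁) : dF n n₁ n₁ = 1 := by
  unfold dF; rw [if_neg (by omega), if_neg (by omega), if_pos rfl]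

lemma dFn₁' {n n₁ : ℕ} : dF n n₁ (n₁+1) = (n:ℝ) := by
  unfold dF; rw [if_neg (by omega), if_neg (by omega), if_neg (by omega), if_pos rfl]

lemma roots_eq {n n₁ : ℕ} (hn : 3 ≤ n) (h1 : 1 ≤ n₁) (h2 : 2*n₁+1 ≤ n) :
    (Multiset.range n).map (dF n n₁)
      = Multiset.replicate 1 (0 : ℝ) + Multiset.replicate 1 (1 : ℝ) +
          Multiset.replicate 1 (n : ℝ) +
          Multiset.replicate (n₁ - 1) ((n₁ : ℝ) + 1) +
          Multiset.replicate (n - (n₁ + 2)) ((n : ℝ) - (n₁ : ℝ)) := by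
  have hsplit : Multiset.range n
      = Multiset.range (n₁+2) + (Multiset.range (n - (n₁+2))).map ((n₁+2) + ·) := by
    rw [← Multiset.range_add]
    congr 1
    omega
  have hsplit2 : Multiset.range n₁
      = Multiset.range 1 + (Multiset.range (n₁-1)).map (1 + ·) := by
    rw [← Multiset.range_add]
    congr 1
    omega
  rw [hsplit, Multiset.map_add, show n₁+2 = (n₁+1)+1 from rfl, Multiset.range_succ,
    Multiset.range_succ, hsplit2, (show Multiset.range 1 = {0} from rfl), Multiset.map_cons, Multiset.map_cons,
    Multiset.map_add, Multiset.map_map, Multiset.map_map, Multiset.map_singleton,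
    dF0, dFn₁ h1, dFn₁']
  have hrep1 : (Multiset.range (n₁-1)).map (dF n n₁ ∘ (1 + ·))
      = Multiset.replicate (n₁-1) ((n₁:ℝ)+1) := by
    apply Multiset.eq_replicate.2
    constructor
    · rw [Multiset.card_map, Multiset.card_range]
    · intro b hb
      obtain ⟨j, hj, rfl⟩ := Multiset.mem_map.1 hb
      rw [Multiset.mem_range] at hj
      simp only [Function.comp]
      unfold dF
      rw [if_neg (by omega), if_pos (by omega)]
  have hrep2 : (Multiset.range (n - (n₁+2))).map (dF n n₁ ∘ ((n₁+2) + ·))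
      = Multiset.replicate (n - (n₁+2)) ((n:ℝ)-(n₁:ℝ)) := by
    apply Multiset.eq_replicate.2
    constructor
    · rw [Multiset.card_map, Multiset.card_range]
    · intro b hb
      obtain ⟨j, hj, rfl⟩ := Multiset.mem_map.1 hb
      simp only [Function.comp]
      unfold dF
      rw [if_neg (by omega), if_neg (by omega), if_neg (by omega), if_neg (by omega)]
  rw [hrep1, hrep2]
  simp only [Multiset.replicate_one, ← Multiset.singleton_add]
  abel

-- ===================== the main theorem =====================

/-- The Laplacian eigenvalues of `Θ_{n,n₁}` (roots of the characteristic polynomial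
with multiplicity) are `0` with multiplicity `1`, `1` with multiplicity `1`, `n` with
multiplicity `1`, `n₁ + 1` with multiplicity `n₁ - 1`, and `n - n₁` with multiplicity
`n - (n₁ + 2)`. -/
theorem roots_charpoly_lapMatrix_thetaGraph (n n₁ : ℕ) (hn : 3 ≤ n)
    (h1 : 1 ≤ n₁) (h2 : n₁ ≤ n - (n₁ + 1)) :
    (SimpleGraph.lapMatrix ℝ (thetaGraph n n₁)).charpoly.roots =
      Multiset.replicate 1 (0 : ℝ) + Multiset.replicate 1 (1 : ℝ) +
        Multiset.replicate 1 (n : ℝ) +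
        Multiset.replicate (n₁ - 1) ((n₁ : ℝ) + 1) +
        Multiset.replicate (n - (n₁ + 2)) ((n : ℝ) - (n₁ : ℝ)) := by
  have h2' : 2*n₁+1 ≤ n := by omega
  rw [charpoly_lap_eq hn h1 h2']
  have hD : (Dmat n n₁).charpoly
      = (Multiset.map (fun a => Polynomial.X - Polynomial.C a)
          (Finset.univ.val.map (fun k : Fin n => dF n n₁ (k:ℕ)))).prod := by
    rw [Matrix.charpoly_of_upperTriangular (Dmat n n₁) (Matrix.blockTriangular_diagonal _),
      Finset.prod_congr rfl (fun k _ => by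
        rw [show (Dmat n n₁) k k = dF n n₁ (k:ℕ) from Matrix.diagonal_apply_eq _ k]),
      Finset.prod_eq_multiset_prod, Multiset.map_map]
    rfl
  rw [hD, Polynomial.roots_multiset_prod_X_sub_C]
  have hval : Finset.univ.val.map (fun k : Fin n => dF n n₁ (k:ℕ))
      = (Multiset.range n).map (dF n n₁) := by
    rw [show (fun k : Fin n => dF n n₁ (k:ℕ)) = dF n n₁ ∘ Fin.val from rfl,
      ← Multiset.map_map, show Finset.univ.val.map Fin.val
          = ((Finset.univ : Finset (Fin n)).map Fin.valEmbedding).val from rfl,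
      Fin.map_valEmbedding_univ,
      show (Finset.Iio n) = Finset.range n from Nat.Iio_eq_range n, Finset.range_val]
  rw [hval, roots_eq hn h1 h2']
end
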